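/- arXiv:2209.01063 — 2 statements merged into one kernel-verified Lean document; each statement's English description precedes it below -/
import Mathlib

section
/- Let E ⊂ ℝ^n and f : E → ℝ. Assume that for every ε > 0 and every x ∈ E there exists ρ > 0 such that, for all r ∈ (0,ρ), E ∩ B̄_r(x) ∩ f^{−1}([f(x)−ρ, f(x)+ρ]) ⊂ {y : dist(y, Π_{x,r}) ≤ ε r} for some m-dimensional affine plane Π_{x,r} passing through x (possibly depending on r). Then the Hausdorff dimension of E is at most m. -/
open MeasureTheory Metric Filter Topology Set

noncomputable section

/-- `Euc n` is the Euclidean space `ℝ^{n+1}`. -/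
abbrev Euc (n : ℕ) : Type := EuclideanSpace ℝ (Fin (n + 1))

/-- Reflection across the thin space `{x_{n+1} = 0}`. -/
def reflectLast (n : ℕ) (x : Euc n) : Euc n :=
  WithLp.toLp 2 (fun i => if i = Fin.last n then -(x i) else x i)

/-- The (pointwise) Laplacian of `u : ℝ^{n+1} → ℝ`. -/
def lap (n : ℕ) (u : Euc n → ℝ) (x : Euc n) : ℝ :=
  ∑ i : Fin (n + 1),
    fderiv ℝ (fun y => fderiv ℝ u y (EuclideanSpace.single i 1)) x (EuclideanSpace.single i 1)

/-- `u` is a solution of the Signorini problem (with zero obstacle) on the open set `s ⊆ ℝ^{n+1}`: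
continuous, even in the last variable, harmonic off the thin space, nonnegative on the thin
space, with distributional Laplacian a nonpositive measure supported on the contact set
`{x_{n+1} = 0} ∩ {u = 0}` (equivalently `min{u, -Δu} = 0` on the thin space). -/
structure IsSignorini (n : ℕ) (s : Set (Euc n)) (u : Euc n → ℝ) : Prop where
  cont : ContinuousOn u s
  symm : ∀ x ∈ s, u (reflectLast n x) = u x
  smooth_off : ∀ x ∈ s, x (Fin.last n) ≠ 0 → ContDiffAt ℝ 2 u x
  harmonic_off : ∀ x ∈ s, x (Fin.last n) ≠ 0 → lap n u x = 0
  nonneg_thin : ∀ x ∈ s, x (Fin.last n) = 0 → 0 ≤ u x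
  /-- `Δu ≤ 0` distributionally -/
  superharm : ∀ φ : Euc n → ℝ, ContDiff ℝ (⊤ : ℕ∞) φ → HasCompactSupport φ →
    tsupport φ ⊆ s → (∀ x, 0 ≤ φ x) → ∫ x, u x * lap n φ x ≤ 0
  /-- `Δu` vanishes away from the contact set `{x_{n+1} = 0} ∩ {u = 0}` -/
  lap_vanish : ∀ φ : Euc n → ℝ, ContDiff ℝ (⊤ : ℕ∞) φ → HasCompactSupport φ →
    tsupport φ ⊆ s → Disjoint (tsupport φ) {x | x (Fin.last n) = 0 ∧ u x = 0} →
    ∫ x, u x * lap n φ x = 0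

/-- `u` is (positively) `κ`-homogeneous. -/
def IsHomog (n : ℕ) (κ : ℝ) (u : Euc n → ℝ) : Prop :=
  ∀ c : ℝ, 0 < c → ∀ x, u (c • x) = c ^ κ * u x

/-- A monotone family of solutions of the Signorini problem, i.e. `(5.1)-(5.2)` of the paper:
for each `t ∈ [-1,1]`, `u t` solves the Signorini problem in `B_1`; the family is monotone in
`t`; it grows at least linearly in `t` on `∂B_1 ∩ {|x_{n+1}| ≥ 1/2}`; and `‖u(·,t)‖_{C^{0,1}} ≤ 1`. -/
structure IsMonotoneFamily (n : ℕ) (u : ℝ → Euc n → ℝ) : Prop where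
  sol : ∀ t ∈ Icc (-1 : ℝ) 1, IsSignorini n (ball 0 1) (u t)
  mono : ∀ t ∈ Icc (-1 : ℝ) 1, ∀ t' ∈ Icc (-1 : ℝ) 1, t < t' →
    ∀ x ∈ closedBall (0 : Euc n) 1, u t x ≤ u t' x
  grow : ∀ t ∈ Icc (-1 : ℝ) 1, ∀ t' ∈ Icc (-1 : ℝ) 1, t < t' →
    ∀ x ∈ sphere (0 : Euc n) 1, (1 : ℝ) / 2 ≤ |x (Fin.last n)| → t' - t ≤ u t' x - u t x
  bdd : ∀ t ∈ Icc (-1 : ℝ) 1, ∀ x ∈ ball (0 : Euc n) 1, |u t x| ≤ 1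
  lip : ∀ t ∈ Icc (-1 : ℝ) 1, LipschitzOnWith 1 (u t) (ball 0 1)

/-- `H(r,w) = r^{-n} ∫_{∂B_r} w²`, written via the surface measure of the unit sphere. -/
def Hfn (n : ℕ) (w : Euc n → ℝ) (r : ℝ) : ℝ :=
  ∫ x : sphere (0 : Euc n) 1, (w (r • (x : Euc n))) ^ 2
    ∂((volume : Measure (Euc n)).toSphere)

/-- `D(r,w) = r^{1-n} ∫_{B_r} |∇w|²`. -/
def Dfn (n : ℕ) (w : Euc n → ℝ) (r : ℝ) : ℝ :=
  r ^ (1 - (n : ℝ)) * ∫ x in ball (0 : Euc n) r, ‖fderiv ℝ w x‖ ^ 2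

/-- The Almgren frequency `φ(r,w) = D(r,w)/H(r,w)`. -/
def freq (n : ℕ) (w : Euc n → ℝ) (r : ℝ) : ℝ := Dfn n w r / Hfn n w r

/-- `φ(0⁺,w)`, the limit of the frequency as `r → 0⁺` (the frequency being nondecreasing in `r`
for the functions considered, the `limsup` is the limit). -/
def freq0 (n : ℕ) (w : Euc n → ℝ) : ℝ := limsup (fun r => freq n w r) (𝓝[>] (0 : ℝ))

/-- The free boundary `Γ(u) = ∂{u(·,0) = 0} × {0}` (boundary in the thin space) of a solution
of the Signorini problem in `B_1`. -/
def FreeBoundary (n : ℕ) (u : Euc n → ℝ) : Set (Euc n) :=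
  {x | x ∈ ball (0 : Euc n) 1 ∧ x (Fin.last n) = 0 ∧ u x = 0 ∧
    x ∈ closure {y : Euc n | y (Fin.last n) = 0 ∧ u y ≠ 0}}

/-- The frequency of `u` at the point `x`. -/
def freqAt (n : ℕ) (u : Euc n → ℝ) (x : Euc n) : ℝ := freq0 n (fun y => u (x + y))

/-- The stratum `Γ_κ(u)` of free boundary points of frequency `κ`. -/
def Gamma (n : ℕ) (u : Euc n → ℝ) (κ : ℝ) : Set (Euc n) :=
  {x ∈ FreeBoundary n u | freqAt n u x = κ}

/-- The set `Γ_{≥κ}(u)` of free boundary points of frequency `≥ κ`. -/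
def GammaGe (n : ℕ) (u : Euc n → ℝ) (κ : ℝ) : Set (Euc n) :=
  {x ∈ FreeBoundary n u | κ ≤ freqAt n u x}

/-- `S = {1, 3/2, 2, 3, 7/2, 4, …} = ℕ_{≥1} ∪ (2ℕ_{≥1} - 1/2)`, the possible homogeneities in
dimension `n + 1 = 2`. -/
def Sexc : Set ℝ :=
  {κ | (∃ k : ℕ, 1 ≤ k ∧ κ = k) ∨ ∃ k : ℕ, 1 ≤ k ∧ κ = 2 * k - 1 / 2}

/-- `Γ_*(u)`: free boundary points whose frequency is not in `S`. -/
def GammaStar (n : ℕ) (u : Euc n → ℝ) : Set (Euc n) :=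
  {x ∈ FreeBoundary n u | freqAt n u x ∉ Sexc}

/-- Membership in `P_2`: 2-homogeneous harmonic polynomials, even in `x_{n+1}`, nonnegative on
the thin space (including `p ≡ 0`). -/
structure MemP2 (n : ℕ) (p : Euc n → ℝ) : Prop where
  smooth : ContDiff ℝ (⊤ : ℕ∞) p
  harm : ∀ x, lap n p x = 0
  homog : ∀ (c : ℝ) (x : Euc n), p (c • x) = c ^ 2 * p x
  symm : ∀ x, p (reflectLast n x) = p x
  nonneg_thin : ∀ x : Euc n, x (Fin.last n) = 0 → 0 ≤ p x

/-- `p` is the (first) blow-up `p_{2,x₀} = lim_{r→0} r^{-2} u(x₀ + r·)` of `u` at `x₀`. -/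
def IsBlowup2At (n : ℕ) (u : Euc n → ℝ) (x₀ : Euc n) (p : Euc n → ℝ) : Prop :=
  MemP2 n p ∧ TendstoUniformlyOn (fun (r : ℝ) (y : Euc n) => u (x₀ + r • y) / r ^ 2) p
    (𝓝[>] (0 : ℝ)) (closedBall 0 1)

/-- Ordinary quadratic points: `Γ₂ᵒ(u) = {x₀ ∈ Γ₂(u) : φ(0⁺, u(x₀+·) - p_{2,x₀}) ≥ 3}`. -/
def Gamma2o (n : ℕ) (u : Euc n → ℝ) : Set (Euc n) :=
  {x ∈ Gamma n u 2 | ∃ p, IsBlowup2At n u x p ∧ 3 ≤ freq0 n (fun y => u (x + y) - p y)}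

/-- Anomalous quadratic points: `Γ₂ᵃ(u) = {x₀ ∈ Γ₂(u) : φ(0⁺, u(x₀+·) - p_{2,x₀}) = 2}`. -/
def Gamma2a (n : ℕ) (u : Euc n → ℝ) : Set (Euc n) :=
  {x ∈ Gamma n u 2 | ∃ p, IsBlowup2At n u x p ∧ freq0 n (fun y => u (x + y) - p y) = 2}

/-- `𝚪_κ`, the union over `t ∈ [-1,1]` of `Γ_κ(u(·,t))`. -/
def BGamma (n : ℕ) (u : ℝ → Euc n → ℝ) (κ : ℝ) : Set (Euc n) :=
  ⋃ t ∈ Icc (-1 : ℝ) 1, Gamma n (u t) κ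

/-- `𝚪_{≥κ}`, the union over `t ∈ [-1,1]` of `Γ_{≥κ}(u(·,t))`. -/
def BGammaGe (n : ℕ) (u : ℝ → Euc n → ℝ) (κ : ℝ) : Set (Euc n) :=
  ⋃ t ∈ Icc (-1 : ℝ) 1, GammaGe n (u t) κ

/-- `𝚪_*`, the union over `t ∈ [-1,1]` of `Γ_*(u(·,t))`. -/
def BGammaStar (n : ℕ) (u : ℝ → Euc n → ℝ) : Set (Euc n) :=
  ⋃ t ∈ Icc (-1 : ℝ) 1, GammaStar n (u t)

/-- `𝚪₂ᵒ`, the union over `t ∈ [-1,1]` of `Γ₂ᵒ(u(·,t))`. -/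
def BGamma2o (n : ℕ) (u : ℝ → Euc n → ℝ) : Set (Euc n) :=
  ⋃ t ∈ Icc (-1 : ℝ) 1, Gamma2o n (u t)

/-- `𝚪₂ᵃ`, the union over `t ∈ [-1,1]` of `Γ₂ᵃ(u(·,t))`. -/
def BGamma2a (n : ℕ) (u : ℝ → Euc n → ℝ) : Set (Euc n) :=
  ⋃ t ∈ Icc (-1 : ℝ) 1, Gamma2a n (u t)

/-- Weak convergence `v_k ⇀ q` in `H¹_loc(ℝ^{n+1})`, tested against smooth compactly
supported functions. -/
def WeakH1loc (n : ℕ) (v : ℕ → Euc n → ℝ) (q : Euc n → ℝ) : Prop :=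
  ∀ φ : Euc n → ℝ, ContDiff ℝ (⊤ : ℕ∞) φ → HasCompactSupport φ →
    Tendsto (fun k => ∫ x, v k x * φ x) atTop (𝓝 (∫ x, q x * φ x)) ∧
    Tendsto (fun k => ∫ x, (inner ℝ (gradient (v k) x) (gradient φ x) : ℝ)) atTop
      (𝓝 (∫ x, (inner ℝ (gradient q x) (gradient φ x) : ℝ)))

/-- A set is discrete: each of its points is isolated. -/
def IsDiscreteSet {X : Type*} [PseudoMetricSpace X] (s : Set X) : Prop :=
  ∀ x ∈ s, ∃ ε > 0, s ∩ ball x ε ⊆ {x}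

end
noncomputable section
open scoped ENNReal NNReal

lemma grid_cover (m : ℕ) (R δ : ℝ) (hδ : 0 < δ) (hR : 0 ≤ R) :
    ∃ F : Finset (EuclideanSpace ℝ (Fin m)),
      (F.card : ℝ) ≤ (2 * R * (m + 1) / δ + 5) ^ m ∧
      ∀ y : EuclideanSpace ℝ (Fin m), ‖y‖ ≤ R → ∃ t ∈ F, dist y t ≤ δ := by
  classical
  set d : ℝ := δ / (m + 1) with hd
  have hm1 : (0:ℝ) < m + 1 := by positivity
  have hdpos : 0 < d := by positivity
  set M : ℕ := ⌈R / d⌉₊ + 1 with hM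
  have hIcc : (Finset.Icc (-(M:ℤ)) M).card = 2 * M + 1 := by
    rw [Int.card_Icc]; omega
  have hRd : R / d = R * (m + 1) / δ := by rw [hd]; field_simp
  refine ⟨(Fintype.piFinset fun _ : Fin m => Finset.Icc (-(M:ℤ)) M).image
      (fun z : Fin m → ℤ => (WithLp.toLp 2 (fun i => d * z i) : EuclideanSpace ℝ (Fin m))), ?_, ?_⟩
  · have h1 : ((Fintype.piFinset fun _ : Fin m => Finset.Icc (-(M:ℤ)) M).card : ℝ)
        = ((2 * M + 1 : ℕ) : ℝ) ^ m := by
      rw [Fintype.card_piFinset]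
      simp [hIcc]
    have h2 : ((2 * M + 1 : ℕ) : ℝ) ≤ 2 * R * (m + 1) / δ + 5 := by
      have hceil : (⌈R / d⌉₊ : ℝ) < R * (m + 1) / δ + 1 := by
        calc (⌈R / d⌉₊ : ℝ) < R / d + 1 := Nat.ceil_lt_add_one (by positivity)
          _ = R * (m + 1) / δ + 1 := by rw [hRd]
      have h5 : 2 * R * (m + 1) / δ = 2 * (R * (m+1) / δ) := by ring
      push_cast [hM]
      rw [h5]
      nlinarith
    calc ((Finset.image _ _).card : ℝ)
        ≤ ((Fintype.piFinset fun _ : Fin m => Finset.Icc (-(M:ℤ)) M).card : ℝ) := by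
          exact_mod_cast Finset.card_image_le
      _ = ((2 * M + 1 : ℕ) : ℝ) ^ m := h1
      _ ≤ (2 * R * (m + 1) / δ + 5) ^ m := by
          apply pow_le_pow_left₀ (by positivity) h2
  · intro y hy
    set z : Fin m → ℤ := fun i => round (y i / d) with hz
    have hyi : ∀ i, |y i| ≤ R := by
      intro i
      have h1 : (y i)^2 ≤ ∑ j, ‖y j‖^2 := by
        have := Finset.single_le_sum (f := fun j => ‖y j‖^2)
          (fun j _ => by positivity) (Finset.mem_univ i)
        simpa [Real.norm_eq_abs, sq_abs] using this
      have h2 : |y i| ≤ ‖y‖ := by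
        rw [EuclideanSpace.norm_eq, ← Real.sqrt_sq_eq_abs]
        exact Real.sqrt_le_sqrt h1
      exact h2.trans hy
    have hzmem : z ∈ Fintype.piFinset fun _ : Fin m => Finset.Icc (-(M:ℤ)) M := by
      rw [Fintype.mem_piFinset]
      intro i
      have h1 : |y i / d - z i| ≤ 1/2 := abs_sub_round (y i / d)
      have h2 : |(z i : ℝ)| ≤ R / d + 1/2 := by
        have h3 : |y i / d| ≤ R / d := by
          rw [abs_div, abs_of_pos hdpos]
          gcongr
          exact hyi i
        have h6 : |(z i : ℝ)| - |y i / d| ≤ |(z i : ℝ) - y i / d| :=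
          abs_sub_abs_le_abs_sub _ _
        rw [abs_sub_comm] at h6
        linarith
      have h4 : |(z i : ℝ)| ≤ (M : ℝ) := by
        have := Nat.le_ceil (R / d)
        push_cast [hM]
        push_cast at h2
        linarith
      have h5 : |z i| ≤ (M : ℤ) := by
        have h7 : ((|z i| : ℤ) : ℝ) ≤ ((M : ℤ) : ℝ) := by
          rw [Int.cast_abs]; exact_mod_cast h4
        exact_mod_cast h7
      exact Finset.mem_Icc.mpr (abs_le.mp h5)
    have hdist : dist y (WithLp.toLp 2 (fun i => d * z i) : EuclideanSpace ℝ (Fin m)) ≤ δ := by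
      have hbound : ∀ i : Fin m, (y i - d * z i)^2 ≤ (d/2)^2 := by
        intro i
        have h1 : |y i / d - z i| ≤ 1/2 := abs_sub_round (y i / d)
        have h2 : |y i - d * z i| ≤ d / 2 := by
          have h3 : y i - d * z i = d * (y i / d - z i) := by field_simp
          rw [h3, abs_mul, abs_of_pos hdpos]
          nlinarith
        nlinarith [abs_nonneg (y i - d * z i), sq_abs (y i - d * z i)]
      have hsum : ∑ i, (y i - d * z i)^2 ≤ m * (d/2)^2 :=
        (Finset.sum_le_sum fun i _ => hbound i).trans_eq (by simp [mul_comm])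
      have hfin : (m : ℝ) * (d/2)^2 ≤ δ^2 := by
        have hdle : d ≤ δ := by
          rw [hd]; apply div_le_self hδ.le; linarith
        have h8 : (m:ℝ) * d ≤ δ := by
          rw [hd, mul_div_assoc', div_le_iff₀ hm1]; nlinarith
        nlinarith [mul_le_mul h8 hdle hdpos.le hδ.le]
      rw [EuclideanSpace.dist_eq]
      have heq2 : ∀ i : Fin m, dist (y i) ((WithLp.toLp 2 (fun i => d * z i) : EuclideanSpace ℝ (Fin m)) i) ^ 2
          = (y i - d * z i)^2 := by
        intro i; rw [Real.dist_eq, sq_abs]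
      calc Real.sqrt (∑ i, dist (y i) ((WithLp.toLp 2 (fun i => d * z i) : EuclideanSpace ℝ (Fin m)) i) ^ 2)
          = Real.sqrt (∑ i, (y i - d * z i)^2) := by
            congr 1; exact Finset.sum_congr rfl fun i _ => heq2 i
        _ ≤ Real.sqrt (δ^2) := Real.sqrt_le_sqrt (hsum.trans hfin)
        _ = δ := Real.sqrt_sq hδ.le
    exact ⟨_, Finset.mem_image_of_mem _ hzmem, hdist⟩

lemma plane_cover (N m : ℕ) (Pl : AffineSubspace ℝ (EuclideanSpace ℝ (Fin N)))
    (x : EuclideanSpace ℝ (Fin N)) (hx : x ∈ Pl)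
    (hdim : Module.finrank ℝ Pl.direction = m) (R δ : ℝ) (hδ : 0 < δ) (hR : 0 ≤ R) :
    ∃ F : Finset (EuclideanSpace ℝ (Fin N)),
      (F.card : ℝ) ≤ (2 * R * (m + 1) / δ + 5) ^ m ∧
      ∀ z ∈ (Pl : Set (EuclideanSpace ℝ (Fin N))) ∩ closedBall x R, ∃ t ∈ F, dist z t ≤ δ := by
  classical
  obtain ⟨F₀, hcard, hcov⟩ := grid_cover m R δ hδ hR
  set b : OrthonormalBasis (Fin m) ℝ Pl.direction :=
    (stdOrthonormalBasis ℝ Pl.direction).reindex (finCongr hdim) with hb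
  set g : EuclideanSpace ℝ (Fin m) → EuclideanSpace ℝ (Fin N) :=
    fun v => x + ((b.repr.symm v : Pl.direction) : EuclideanSpace ℝ (Fin N)) with hg
  refine ⟨F₀.image g, ?_, ?_⟩
  · calc ((F₀.image g).card : ℝ) ≤ (F₀.card : ℝ) := by exact_mod_cast Finset.card_image_le
      _ ≤ _ := hcard
  · rintro z ⟨hzP, hzB⟩
    have hw : z - x ∈ Pl.direction := by
      have := AffineSubspace.vsub_mem_direction hzP hx
      simpa using this
    set w : Pl.direction := ⟨z - x, hw⟩ with hwdef
    have hnw : ‖b.repr w‖ ≤ R := by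
      rw [LinearIsometryEquiv.norm_map]
      have h1 : ‖w‖ = ‖z - x‖ := rfl
      rw [h1, ← dist_eq_norm]
      exact mem_closedBall.mp hzB
    obtain ⟨t, htF, htd⟩ := hcov (b.repr w) hnw
    refine ⟨g t, Finset.mem_image_of_mem _ htF, ?_⟩
    set u : Pl.direction := b.repr.symm t with hu
    have h1 : dist z (g t) = dist w u := by
      rw [dist_eq_norm, dist_eq_norm]
      have h2 : z - (x + (u : EuclideanSpace ℝ (Fin N))) = ((w - u : Pl.direction) : EuclideanSpace ℝ (Fin N)) := by
        push_cast
        simp only [hwdef]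
        abel
      rw [hg]
      simp only []
      rw [h2]
      rfl
    have h3 : dist w u = dist (b.repr w) t := by
      rw [hu, ← (b.repr.symm_apply_apply w)]
      rw [LinearIsometryEquiv.dist_map]
      rw [b.repr.symm_apply_apply]
    rw [h1, h3]
    exact htd

lemma step_cover (N m : ℕ) (S : Set (EuclideanSpace ℝ (Fin N))) (ε ρ0 : ℝ)
    (hε : 0 < ε) (hε1 : ε ≤ 1/2)
    (hyp : ∀ x ∈ S, ∀ r ∈ Ioo (0:ℝ) ρ0,
      ∃ Pl : AffineSubspace ℝ (EuclideanSpace ℝ (Fin N)), x ∈ Pl ∧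
        Module.finrank ℝ Pl.direction = m ∧
        ∀ y ∈ S, y ∈ closedBall x r → Metric.infDist y (Pl : Set (EuclideanSpace ℝ (Fin N))) ≤ ε * r)
    (x : EuclideanSpace ℝ (Fin N)) (hx : x ∈ S) (r : ℝ) (hr : r ∈ Ioo (0:ℝ) ρ0) :
    ∃ F : Finset (EuclideanSpace ℝ (Fin N)), ↑F ⊆ S ∧
      (F.card : ℝ) ≤ (4*(m+1)/ε + 5) ^ m ∧
      S ∩ closedBall x r ⊆ ⋃ z ∈ F, closedBall z (8*ε*r) := by
  classical
  obtain ⟨hr0, hrρ⟩ := hr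
  obtain ⟨Pl, hxPl, hdim, hflat⟩ := hyp x hx r ⟨hr0, hrρ⟩
  have hεr : 0 < ε * r := by positivity
  obtain ⟨F₀, hcard, hcov⟩ := plane_cover N m Pl x hxPl hdim (2*r) (ε*r) hεr (by positivity)
  set sel : EuclideanSpace ℝ (Fin N) → EuclideanSpace ℝ (Fin N) := fun t =>
    if h : (S ∩ closedBall t (3*(ε*r))).Nonempty then h.choose else x with hsel
  have hselS : ∀ t, sel t ∈ S := by
    intro t
    rw [hsel]
    by_cases h : (S ∩ closedBall t (3*(ε*r))).Nonempty
    · simp only [h, dif_pos]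
      exact h.choose_spec.1
    · simp only [h, dif_neg, not_false_iff]
      exact hx
  have hselB : ∀ t, (S ∩ closedBall t (3*(ε*r))).Nonempty → sel t ∈ closedBall t (3*(ε*r)) := by
    intro t h
    rw [hsel]
    simp only [h, dif_pos]
    exact h.choose_spec.2
  refine ⟨F₀.image sel, ?_, ?_, ?_⟩
  · intro z hz
    simp only [Finset.coe_image, Set.mem_image, Finset.mem_coe] at hz
    obtain ⟨t, _, rfl⟩ := hz
    exact hselS t
  · have hsimp : 2*(2*r)*(m+1)/(ε*r) = 4*(m+1)/ε := by
      field_simp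
      ring
    calc ((F₀.image sel).card : ℝ) ≤ (F₀.card : ℝ) := by exact_mod_cast Finset.card_image_le
      _ ≤ (2*(2*r)*(m+1)/(ε*r) + 5) ^ m := hcard
      _ = (4*(m+1)/ε + 5) ^ m := by rw [hsimp]
  · rintro y ⟨hyS, hyB⟩
    have hPl_ne : (Pl : Set (EuclideanSpace ℝ (Fin N))).Nonempty := ⟨x, hxPl⟩
    have hinf : Metric.infDist y ↑Pl < 2*(ε*r) :=
      lt_of_le_of_lt (hflat y hyS hyB) (by nlinarith)
    obtain ⟨z, hzPl, hzd⟩ := (Metric.infDist_lt_iff hPl_ne).mp hinf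
    have hzB : z ∈ closedBall x (2*r) := by
      rw [mem_closedBall]
      have h1 : dist z x ≤ dist z y + dist y x := dist_triangle _ _ _
      have h2 : dist y x ≤ r := mem_closedBall.mp hyB
      rw [dist_comm z y] at h1
      nlinarith
    obtain ⟨t, htF, htd⟩ := hcov z ⟨hzPl, hzB⟩
    have hyt : dist y t ≤ 3*(ε*r) := by
      calc dist y t ≤ dist y z + dist z t := dist_triangle _ _ _
        _ ≤ 2*(ε*r) + ε*r := add_le_add hzd.le htd
        _ = 3*(ε*r) := by ring
    have hne : (S ∩ closedBall t (3*(ε*r))).Nonempty := ⟨y, hyS, mem_closedBall.mpr hyt⟩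
    have hst := hselB t hne
    refine Set.mem_biUnion (Finset.mem_image_of_mem sel htF) ?_
    rw [mem_closedBall]
    calc dist y (sel t) ≤ dist y t + dist t (sel t) := dist_triangle _ _ _
      _ ≤ 3*(ε*r) + 3*(ε*r) := by
          refine add_le_add hyt ?_
          rw [dist_comm]
          exact mem_closedBall.mp hst
      _ ≤ 8*ε*r := by nlinarith

lemma flat_null (N m : ℕ) (S : Set (EuclideanSpace ℝ (Fin N))) (ε ρ0 s : ℝ)
    (hρ0 : 0 < ρ0) (hε : 0 < ε) (hε16 : ε ≤ 1/16) (hs0 : 0 < s)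
    (hconst : ((4*(m+1)/ε + 5) ^ m) * (8*ε) ^ s < 1)
    (hyp : ∀ x ∈ S, ∀ r ∈ Ioo (0:ℝ) ρ0,
      ∃ Pl : AffineSubspace ℝ (EuclideanSpace ℝ (Fin N)), x ∈ Pl ∧
        Module.finrank ℝ Pl.direction = m ∧
        ∀ y ∈ S, y ∈ closedBall x r → Metric.infDist y (Pl : Set (EuclideanSpace ℝ (Fin N))) ≤ ε * r) :
    μH[s] S = 0 := by
  classical
  set K : ℝ := (4*(m+1)/ε + 5) ^ m with hK
  have hKpos : 0 < K := by positivity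
  have h8ε : 0 ≤ 8*ε := by linarith
  have h8ε1 : 8*ε ≤ 1/2 := by linarith
  -- local estimate
  have key : ∀ x0 ∈ S, ∀ r0 ∈ Ioo (0:ℝ) ρ0, μH[s] (S ∩ closedBall x0 r0) = 0 := by
    intro x0 hx0 r0 hr0
    have iter : ∀ k : ℕ, ∃ F : Finset (EuclideanSpace ℝ (Fin N)), ↑F ⊆ S ∧
        (F.card : ℝ) ≤ K ^ k ∧
        S ∩ closedBall x0 r0 ⊆ ⋃ z ∈ F, closedBall z ((8*ε)^k * r0) := by
      intro k
      induction k with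
      | zero =>
        refine ⟨{x0}, by simpa using hx0, by simp, ?_⟩
        rintro y ⟨-, hy⟩
        simp only [Finset.mem_singleton, Set.mem_iUnion]
        exact ⟨x0, by simp, by simpa using hy⟩
      | succ k ih =>
        obtain ⟨F, hFS, hFcard, hFcov⟩ := ih
        have hpow1 : (8*ε)^k ≤ 1 := pow_le_one₀ h8ε (by linarith)
        have hpowpos : 0 < (8*ε)^k := pow_pos (by linarith) k
        have hrk : (8*ε)^k * r0 ∈ Ioo (0:ℝ) ρ0 := by
          refine ⟨mul_pos hpowpos hr0.1, ?_⟩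
          nlinarith [hr0.1, hr0.2, hpow1, hpowpos]
        choose! G hG1 hG2 hG3 using fun z (hz : z ∈ S) =>
          step_cover N m S ε ρ0 hε (by linarith) hyp z hz ((8*ε)^k*r0) hrk
        refine ⟨F.biUnion G, ?_, ?_, ?_⟩
        · intro w hw
          simp only [Finset.coe_biUnion, Set.mem_iUnion, Finset.mem_coe] at hw
          obtain ⟨z, hz, hwz⟩ := hw
          exact hG1 z (hFS hz) hwz
        · have hb : ((F.biUnion G).card : ℝ) ≤ ∑ z ∈ F, ((G z).card : ℝ) := by
            have h := Finset.card_biUnion_le (s := F) (t := G)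
            have h2 : ((F.biUnion G).card : ℝ) ≤ ((∑ z ∈ F, (G z).card : ℕ) : ℝ) := by
              exact_mod_cast h
            simpa using h2
          calc ((F.biUnion G).card : ℝ) ≤ ∑ z ∈ F, ((G z).card : ℝ) := hb
            _ ≤ ∑ _z ∈ F, K := by
              refine Finset.sum_le_sum fun z hz => ?_
              exact hG2 z (hFS hz)
            _ = (F.card : ℝ) * K := by rw [Finset.sum_const]; simp [mul_comm]
            _ ≤ K ^ k * K := mul_le_mul_of_nonneg_right hFcard hKpos.le
            _ = K ^ (k+1) := by rw [pow_succ]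
        · intro y hy
          obtain ⟨z, hzF, hyz⟩ := Set.mem_iUnion₂.mp (hFcov hy)
          have hyS : y ∈ S := hy.1
          have := hG3 z (hFS hzF) ⟨hyS, hyz⟩
          obtain ⟨w, hwG, hyw⟩ := Set.mem_iUnion₂.mp this
          refine Set.mem_iUnion₂.mpr ⟨w, Finset.mem_biUnion.mpr ⟨z, hzF, hwG⟩, ?_⟩
          have hrad : (8*ε)^(k+1) * r0 = 8*ε*((8*ε)^k*r0) := by ring
          rw [hrad]
          exact hyw
    choose Fk hFk1 hFk2 hFk3 using iter
    -- Hausdorff measure estimate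
    refine le_antisymm ?_ zero_le
    have hbound := Measure.hausdorffMeasure_le_liminf_sum (l := atTop) s (S ∩ closedBall x0 r0)
      (fun k => ENNReal.ofReal (2*((8*ε)^k*r0)))
      ?_ (fun k (i : Fk k) => closedBall (i : EuclideanSpace ℝ (Fin N)) ((8*ε)^k*r0)) ?_ ?_
    · refine le_trans hbound ?_
      have hterm : ∀ k : ℕ, (∑ i : (Fk k : Finset (EuclideanSpace ℝ (Fin N))),
          EMetric.diam (closedBall (i : EuclideanSpace ℝ (Fin N)) ((8*ε)^k*r0)) ^ s)
          ≤ ENNReal.ofReal ((K*(8*ε)^s)^k * (2*r0)^s) := by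
        intro k
        have hrk0 : (0:ℝ) ≤ (8*ε)^k * r0 :=
          le_of_lt (mul_pos (pow_pos (by linarith) k) hr0.1)
        have hdiam : ∀ i : (Fk k : Finset (EuclideanSpace ℝ (Fin N))),
            EMetric.diam (closedBall (i : EuclideanSpace ℝ (Fin N)) ((8*ε)^k*r0)) ^ s
            ≤ ENNReal.ofReal (2*((8*ε)^k*r0)) ^ s := by
          intro i
          refine ENNReal.rpow_le_rpow ?_ hs0.le
          refine Metric.ediam_le_of_forall_dist_le fun a ha b hb => ?_
          calc dist a b ≤ dist a (i : EuclideanSpace ℝ (Fin N)) + dist (i : EuclideanSpace ℝ (Fin N)) b :=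
                dist_triangle _ _ _
            _ ≤ (8*ε)^k*r0 + (8*ε)^k*r0 := by
                refine add_le_add (mem_closedBall.mp ha) ?_
                rw [dist_comm]; exact mem_closedBall.mp hb
            _ = 2*((8*ε)^k*r0) := by ring
        calc (∑ i : (Fk k : Finset (EuclideanSpace ℝ (Fin N))),
              EMetric.diam (closedBall (i : EuclideanSpace ℝ (Fin N)) ((8*ε)^k*r0)) ^ s)
            ≤ ∑ _i : (Fk k : Finset (EuclideanSpace ℝ (Fin N))),
              ENNReal.ofReal (2*((8*ε)^k*r0)) ^ s := Finset.sum_le_sum fun i _ => hdiam i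
          _ = ((Fk k).card : ℝ≥0∞) * ENNReal.ofReal (2*((8*ε)^k*r0)) ^ s := by
              rw [Finset.sum_const, Finset.card_univ, Fintype.card_coe, nsmul_eq_mul]
          _ ≤ ENNReal.ofReal (K^k) * ENNReal.ofReal ((2*((8*ε)^k*r0))^s) := by
              refine mul_le_mul ?_ ?_ zero_le zero_le
              · rw [← ENNReal.ofReal_natCast]
                exact ENNReal.ofReal_le_ofReal (hFk2 k)
              · rw [← ENNReal.ofReal_rpow_of_nonneg (by nlinarith [hrk0]) hs0.le]
          _ = ENNReal.ofReal (K^k * (2*((8*ε)^k*r0))^s) := by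
              rw [← ENNReal.ofReal_mul (by positivity)]
          _ = ENNReal.ofReal ((K*(8*ε)^s)^k * (2*r0)^s) := by
              congr 1
              have hpowc : (((8*ε)^k : ℝ)) ^ s = ((8*ε)^s)^k := by
                rw [← Real.rpow_natCast (8*ε) k, ← Real.rpow_natCast ((8*ε)^s) k,
                  ← Real.rpow_mul h8ε, ← Real.rpow_mul h8ε, mul_comm (k:ℝ) s]
              have h1 : (2*((8*ε)^k*r0)) = (2*r0) * (8*ε)^k := by ring
              rw [h1, Real.mul_rpow (by nlinarith [hr0.1] : (0:ℝ) ≤ 2*r0) (pow_nonneg h8ε k),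
                hpowc, mul_pow]
              ring
      have hc1 : 0 ≤ K*(8*ε)^s := by positivity
      have hc2 : K*(8*ε)^s < 1 := hconst
      have htend : Tendsto (fun k : ℕ => ENNReal.ofReal ((K*(8*ε)^s)^k * (2*r0)^s)) atTop (𝓝 0) := by
        have h1 : Tendsto (fun k : ℕ => (K*(8*ε)^s)^k * (2*r0)^s) atTop (𝓝 0) := by
          have := tendsto_pow_atTop_nhds_zero_of_lt_one hc1 hc2
          simpa using this.mul_const ((2*r0)^s)
        have := (ENNReal.continuous_ofReal.tendsto 0).comp h1
        simpa [Function.comp_def] using this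
      calc liminf (fun k : ℕ => ∑ i : (Fk k : Finset (EuclideanSpace ℝ (Fin N))),
            EMetric.diam (closedBall (i : EuclideanSpace ℝ (Fin N)) ((8*ε)^k*r0)) ^ s) atTop
          ≤ liminf (fun k : ℕ => ENNReal.ofReal ((K*(8*ε)^s)^k * (2*r0)^s)) atTop := by
            exact liminf_le_liminf (Filter.Eventually.of_forall hterm)
        _ = 0 := htend.liminf_eq
    · -- radii tend to zero
      have h1 : Tendsto (fun k : ℕ => 2*((8*ε)^k*r0)) atTop (𝓝 0) := by
        have := tendsto_pow_atTop_nhds_zero_of_lt_one h8ε (by linarith : 8*ε < 1)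
        have h2 := (this.mul_const r0).const_mul 2
        simpa using h2
      have := (ENNReal.continuous_ofReal.tendsto 0).comp h1
      simpa [Function.comp_def] using this
    · exact Filter.Eventually.of_forall fun k => fun i => by
        refine Metric.ediam_le_of_forall_dist_le fun a ha b hb => ?_
        calc dist a b ≤ dist a (i : EuclideanSpace ℝ (Fin N)) + dist (i : EuclideanSpace ℝ (Fin N)) b :=
              dist_triangle _ _ _
          _ ≤ (8*ε)^k*r0 + (8*ε)^k*r0 := by
              refine add_le_add (mem_closedBall.mp ha) ?_
              rw [dist_comm]; exact mem_closedBall.mp hb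
          _ = 2*((8*ε)^k*r0) := by ring
    · refine Filter.Eventually.of_forall fun k => ?_
      intro y hy
      obtain ⟨z, hzF, hyz⟩ := Set.mem_iUnion₂.mp (hFk3 k hy)
      exact Set.mem_iUnion.mpr ⟨⟨z, hzF⟩, hyz⟩
  -- globalize via countable cover
  rcases Set.eq_empty_or_nonempty S with rfl | hSne
  · simp
  obtain ⟨u, hu_count, hu_dense⟩ := TopologicalSpace.exists_countable_dense S
  set T : Set (EuclideanSpace ℝ (Fin N)) := ((↑) : S → EuclideanSpace ℝ (Fin N)) '' u with hT
  have hT_count : T.Countable := hu_count.image _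
  have hT_sub : T ⊆ S := by rintro _ ⟨⟨t, ht⟩, -, rfl⟩; exact ht
  have hcover : S ⊆ ⋃ t ∈ T, (S ∩ closedBall t (ρ0/2)) := by
    intro x hx
    obtain ⟨⟨t, htS⟩, htu, htd⟩ := hu_dense.exists_dist_lt (⟨x, hx⟩ : S) (by positivity : (0:ℝ) < ρ0/2)
    refine Set.mem_iUnion₂.mpr ⟨t, ⟨⟨t, htS⟩, htu, rfl⟩, hx, ?_⟩
    rw [mem_closedBall]
    rw [Subtype.dist_eq] at htd
    exact le_of_lt htd
  refine measure_mono_null hcover ?_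
  refine (measure_biUnion_null_iff hT_count).mpr fun t ht => ?_
  exact key t (hT_sub ht) (ρ0/2) ⟨by positivity, by linarith⟩

end

/-- **Lemma 2.14 (Reifenberg-type dimension bound).** If, for every `ε > 0` and `x ∈ E`, there
is `ρ > 0` such that for all `r ∈ (0,ρ)` the set `E ∩ B̄_r(x) ∩ f⁻¹([f(x)-ρ, f(x)+ρ])` lies in
an `εr`-neighborhood of some `m`-dimensional affine plane through `x`, then `dim_H E ≤ m`. -/
theorem reifenberg_dimension_bound (N m : ℕ) (E : Set (EuclideanSpace ℝ (Fin N)))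
    (f : EuclideanSpace ℝ (Fin N) → ℝ)
    (h : ∀ ε > (0 : ℝ), ∀ x ∈ E, ∃ ρ > (0 : ℝ), ∀ r ∈ Ioo (0 : ℝ) ρ,
      ∃ Pl : AffineSubspace ℝ (EuclideanSpace ℝ (Fin N)),
        x ∈ Pl ∧ Module.finrank ℝ Pl.direction = m ∧
        ∀ y ∈ E, y ∈ closedBall x r → f y ∈ Icc (f x - ρ) (f x + ρ) →
          Metric.infDist y (Pl : Set (EuclideanSpace ℝ (Fin N))) ≤ ε * r) :
    dimH E ≤ m := by
  by_contra hcon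
  rw [not_le] at hcon
  obtain ⟨d, hd1, hd2⟩ := ENNReal.lt_iff_exists_nnreal_btwn.mp hcon
  refine absurd hd2 (not_lt.mpr ?_)
  have hmd : (m : ℝ) < (d : ℝ) := by exact_mod_cast hd1
  refine dimH_le_of_hausdorffMeasure_ne_top (d := d) ?_
  set s : ℝ := (d : ℝ) with hs
  suffices hz : μH[s] E = 0 by
    rw [hz]; exact ENNReal.zero_ne_top
  set t : ℝ := s - m with ht
  have ht0 : 0 < t := by rw [ht]; linarith
  set C : ℝ := 4*(m+1) + 5 with hC
  have hC0 : 0 < C := by positivity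
  set B : ℝ := C^m * (8:ℝ)^s with hB
  have hB0 : 0 < B := by
    apply mul_pos (pow_pos hC0 m) (Real.rpow_pos_of_pos (by norm_num) s)
  set ε : ℝ := min (1/16) ((1/(2*B)) ^ (1/t)) with hε
  have hεpos : 0 < ε := lt_min (by norm_num) (Real.rpow_pos_of_pos (by positivity) _)
  have hε16 : ε ≤ 1/16 := min_le_left _ _
  have hεt : ε ^ t ≤ 1/(2*B) := by
    have h1 : ε ≤ (1/(2*B)) ^ (1/t) := min_le_right _ _
    calc ε ^ t ≤ ((1/(2*B)) ^ (1/t)) ^ t := Real.rpow_le_rpow hεpos.le h1 ht0.le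
      _ = (1/(2*B)) ^ ((1/t)*t) := by rw [← Real.rpow_mul (by positivity)]
      _ = 1/(2*B) := by rw [one_div_mul_cancel ht0.ne', Real.rpow_one]
  have hs0 : 0 < s := lt_of_le_of_lt (Nat.cast_nonneg m) hmd
  have hconst : ((4*(m+1)/ε + 5) ^ m) * (8*ε) ^ s < 1 := by
    have h1 : (4*(m+1)/ε + 5 : ℝ) ≤ C/ε := by
      rw [hC, add_div]
      have h5 : (5:ℝ) ≤ 5/ε := by
        rw [le_div_iff₀ hεpos]; nlinarith
      linarith
    have h2 : ((4*(m+1)/ε + 5) ^ m : ℝ) ≤ (C/ε)^m :=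
      pow_le_pow_left₀ (by positivity) h1 m
    have h3 : ((8*ε) : ℝ) ^ s = (8:ℝ)^s * ε^s := Real.mul_rpow (by norm_num) hεpos.le
    have key : (C/ε)^m * ((8*ε))^s = B * ε^t := by
      rw [h3, div_pow, hB, ht]
      rw [← Real.rpow_natCast ε m, Real.rpow_sub hεpos]
      ring
    have hεB : B * ε^t ≤ 1/2 := by
      calc B * ε^t ≤ B * (1/(2*B)) := mul_le_mul_of_nonneg_left hεt hB0.le
        _ = 1/2 := by field_simp
    calc ((4*(m+1)/ε + 5) ^ m) * (8*ε) ^ s ≤ (C/ε)^m * (8*ε)^s :=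
          mul_le_mul_of_nonneg_right h2 (Real.rpow_nonneg (by positivity) s)
      _ = B * ε^t := key
      _ ≤ 1/2 := hεB
      _ < 1 := by norm_num
  choose! ρf hρpos hρspec using h ε hεpos
  set Ep : ℕ → ℤ → Set (EuclideanSpace ℝ (Fin N)) := fun j k =>
    {x | x ∈ E ∧ 1/((j:ℝ)+1) < ρf x ∧ f x ∈ Ico ((k:ℝ)/((j:ℝ)+1)) (((k:ℝ)+1)/((j:ℝ)+1))} with hEp
  have hdecomp : E ⊆ ⋃ (j : ℕ) (k : ℤ), Ep j k := by
    intro x hx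
    obtain ⟨j, hj⟩ := exists_nat_one_div_lt (hρpos x hx)
    refine mem_iUnion.mpr ⟨j, mem_iUnion.mpr ⟨⌊f x * ((j:ℝ)+1)⌋, hx, by exact_mod_cast hj, ?_, ?_⟩⟩
    · rw [div_le_iff₀ (by positivity)]
      exact_mod_cast Int.floor_le (f x * ((j:ℝ)+1))
    · rw [lt_div_iff₀ (by positivity)]
      exact_mod_cast Int.lt_floor_add_one (f x * ((j:ℝ)+1))
  refine measure_mono_null hdecomp ?_
  refine measure_iUnion_null fun j => measure_iUnion_null fun k => ?_
  apply flat_null N m (Ep j k) ε (1/((j:ℝ)+1)) s (by positivity) hεpos hε16 hs0 hconst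
  rintro x ⟨hxE, hxρ, hxf⟩ r hr
  obtain ⟨Pl, hPl, hdim, hspec⟩ := hρspec x hxE r ⟨hr.1, lt_trans hr.2 hxρ⟩
  refine ⟨Pl, hPl, hdim, ?_⟩
  rintro y ⟨hyE, hyρ, hyf⟩ hyB
  refine hspec y hyE hyB ?_
  have hgap : ((k:ℝ)+1)/((j:ℝ)+1) - (k:ℝ)/((j:ℝ)+1) = 1/((j:ℝ)+1) := by
    rw [div_sub_div_same]; norm_num
  exact ⟨by linarith [hxf.1, hxf.2, hyf.1, hyf.2], by linarith [hxf.1, hxf.2, hyf.1, hyf.2]⟩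
end

section
/- Let {E_t}_{t ∈ [−1,1]} be a family of subsets of ℝ^n and E := ∪_{t ∈ [−1,1]} E_t. Let 1 ≤ β ≤ n and γ > 0, and assume: (i) dim_H(E) ≤ β; (ii) for all ε > 0, all t_0 ∈ [−1,1], and all x_0 ∈ E_{t_0}, there exists ρ > 0 such that B_r(x_0) ∩ E_t = ∅ for all r ∈ (0,ρ) and all t > t_0 + r^{γ−ε}. Then: (a) if γ > β, then dim_H({t ∈ [−1,1] : E_t ≠ ∅}) ≤ β/γ; (b) if γ ≤ β, then dim_H(E_t) ≤ β − γ for Lebesgue-almost every t ∈ [−1,1]. -/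
open MeasureTheory Metric Filter Topology Set

section AbstractCleaning

open ENNReal NNReal

lemma clean_interval_bound {N : ℕ} {Efam : ℝ → Set (EuclideanSpace ℝ (Fin N))}
    {γ' : ℝ} (hγ' : 0 < γ')
    {ρ : ℝ → EuclideanSpace ℝ (Fin N) → ℝ}
    (hρ : ∀ t ∈ Icc (-1:ℝ) 1, ∀ x ∈ Efam t, ∀ r ∈ Ioo (0:ℝ) (ρ t x), ∀ t' ∈ Icc (-1:ℝ) 1,
        t + r ^ γ' < t' → ball x r ∩ Efam t' = ∅)
    {m : ℝ} {c : Set (EuclideanSpace ℝ (Fin N))} (hd : EMetric.diam c < ENNReal.ofReal m)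
    {t t' : ℝ} (ht : t ∈ Icc (-1:ℝ) 1) (ht' : t' ∈ Icc (-1:ℝ) 1) (htt' : t ≤ t')
    {x : EuclideanSpace ℝ (Fin N)} (hx : x ∈ Efam t ∩ c) (hxρ : m ≤ ρ t x)
    {x' : EuclideanSpace ℝ (Fin N)} (hx' : x' ∈ Efam t' ∩ c) :
    t' - t ≤ (EMetric.diam c).toReal ^ γ' := by
  set d : ℝ := (EMetric.diam c).toReal with hdef
  have hctop : EMetric.diam c ≠ ⊤ := hd.ne_top
  have hdm : d < m := by
    rw [← ENNReal.lt_ofReal_iff_toReal_lt hctop]; exact hd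
  have hd0 : 0 ≤ d := ENNReal.toReal_nonneg
  have hdist : dist x' x ≤ d := by
    rw [dist_edist, hdef]
    exact ENNReal.toReal_mono hctop (EMetric.edist_le_diam_of_mem hx'.2 hx.2)
  have key : ∀ θ ∈ Ioo (0:ℝ) (m - d), t' - t ≤ (d + θ) ^ γ' := by
    intro θ hθ
    set r : ℝ := d + θ with hr
    have hr0 : 0 < r := by have := hθ.1; positivity
    have hrρ : r < ρ t x := by
      have : r < m := by simp only [hr]; linarith [hθ.2]
      linarith
    by_contra hcon
    push_neg at hcon
    have hball := hρ t ht x hx.1 r ⟨hr0, hrρ⟩ t' ht' (by linarith)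
    have : x' ∈ ball x r ∩ Efam t' := by
      refine ⟨?_, hx'.1⟩
      rw [mem_ball]
      have : θ > 0 := hθ.1
      linarith
    rw [hball] at this
    exact this
  have hmd : 0 < m - d := by linarith
  have hlim : Tendsto (fun θ : ℝ => (d + θ) ^ γ') (𝓝[>] (0:ℝ)) (𝓝 (d ^ γ')) := by
    have h1 : Tendsto (fun θ : ℝ => d + θ) (𝓝[>] (0:ℝ)) (𝓝 d) := by
      have h2 : Tendsto (fun θ : ℝ => d + θ) (𝓝 (0:ℝ)) (𝓝 (d + 0)) :=
        (continuous_const.add continuous_id).tendsto 0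
      simpa using h2.mono_left nhdsWithin_le_nhds
    exact ((Real.continuousAt_rpow_const d γ' (Or.inr hγ'.le)).tendsto.comp h1)
  refine ge_of_tendsto hlim ?_
  filter_upwards [Ioo_mem_nhdsGT_of_mem (Set.left_mem_Ico.2 hmd)] with θ hθ
  exact key θ hθ

lemma clean_cover {N : ℕ} {Efam : ℝ → Set (EuclideanSpace ℝ (Fin N))}
    {β' γ' : ℝ} (hβ' : 0 < β') (hγ' : 0 < γ')
    (hE0 : μH[β'] (⋃ t ∈ Icc (-1:ℝ) 1, Efam t) = 0)
    {ρ : ℝ → EuclideanSpace ℝ (Fin N) → ℝ}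
    (hρ : ∀ t ∈ Icc (-1:ℝ) 1, ∀ x ∈ Efam t, ∀ r ∈ Ioo (0:ℝ) (ρ t x), ∀ t' ∈ Icc (-1:ℝ) 1,
        t + r ^ γ' < t' → ball x r ∩ Efam t' = ∅)
    {m : ℝ} {η : ℝ≥0∞} (hη : 0 < η) {rb : ℝ≥0∞} (hrb : 0 < rb)
    (hrbm : rb < ENNReal.ofReal m) :
    ∃ (c : ℕ → Set (EuclideanSpace ℝ (Fin N))) (J : ℕ → Set ℝ),
      ((⋃ t ∈ Icc (-1:ℝ) 1, Efam t) ⊆ ⋃ n, c n) ∧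
      (∀ n, EMetric.diam (c n) ≤ rb) ∧
      (∑' n, EMetric.diam (c n) ^ β') ≤ η ∧
      (∀ n, MeasurableSet (J n)) ∧
      (∀ n, volume (J n) ≤ 2 * EMetric.diam (c n) ^ γ') ∧
      (∀ n, EMetric.diam (J n) ≤ 2 * EMetric.diam (c n) ^ γ') ∧
      (∀ n, ∀ t ∈ Icc (-1:ℝ) 1, (Efam t ∩ {x | m ≤ ρ t x} ∩ c n).Nonempty → t ∈ J n) := by
  set E := ⋃ t ∈ Icc (-1:ℝ) 1, Efam t with hE
  -- extract a cover from the vanishing Hausdorff measure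
  have h1 : (⨅ (c : ℕ → Set (EuclideanSpace ℝ (Fin N))) (_ : E ⊆ ⋃ n, c n)
      (_ : ∀ n, EMetric.diam (c n) ≤ rb),
      ∑' n, ⨆ _ : (c n).Nonempty, EMetric.diam (c n) ^ β') < η := by
    refine lt_of_le_of_lt ?_ hη
    rw [← hE0, Measure.hausdorffMeasure_apply]
    exact le_iSup₂ (f := fun (r : ℝ≥0∞) (_ : 0 < r) =>
      ⨅ (c : ℕ → Set (EuclideanSpace ℝ (Fin N))) (_ : E ⊆ ⋃ n, c n)
        (_ : ∀ n, EMetric.diam (c n) ≤ r),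
        ∑' n, ⨆ _ : (c n).Nonempty, EMetric.diam (c n) ^ β') rb hrb
  simp only [iInf_lt_iff] at h1
  obtain ⟨c, hcov, hdiam, hsum⟩ := h1
  have hsum' : (∑' n, EMetric.diam (c n) ^ β') ≤ η := by
    refine le_trans (le_of_eq (tsum_congr fun n => ?_)) hsum.le
    rcases eq_empty_or_nonempty (c n) with h | h
    · simp [h, EMetric.diam, Metric.ediam_empty, ENNReal.zero_rpow_of_pos hβ']
    · simp [h]
  have hdlt : ∀ n, EMetric.diam (c n) < ENNReal.ofReal m := fun n => lt_of_le_of_lt (hdiam n) hrbm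
  have hdtop : ∀ n, EMetric.diam (c n) ≠ ⊤ := fun n => (hdlt n).ne_top
  have hofL : ∀ n, ENNReal.ofReal (2 * (EMetric.diam (c n)).toReal ^ γ')
      = 2 * EMetric.diam (c n) ^ γ' := by
    intro n
    rw [ENNReal.ofReal_mul (by norm_num : (0:ℝ) ≤ 2), ENNReal.toReal_rpow,
      ENNReal.ofReal_toReal (ENNReal.rpow_ne_top_of_nonneg hγ'.le (hdtop n))]
    norm_num
  have hJn : ∀ n, ∃ Jn : Set ℝ, MeasurableSet Jn ∧
      volume Jn ≤ 2 * EMetric.diam (c n) ^ γ' ∧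
      EMetric.diam Jn ≤ 2 * EMetric.diam (c n) ^ γ' ∧
      (∀ t ∈ Icc (-1:ℝ) 1, (Efam t ∩ {x | m ≤ ρ t x} ∩ c n).Nonempty → t ∈ Jn) := by
    intro n
    set L : ℝ := (EMetric.diam (c n)).toReal ^ γ' with hLdef
    have hL0 : 0 ≤ L := Real.rpow_nonneg ENNReal.toReal_nonneg _
    by_cases hS : ∃ t₀ ∈ Icc (-1:ℝ) 1, (Efam t₀ ∩ {x | m ≤ ρ t₀ x} ∩ c n).Nonempty
    · obtain ⟨t₀, ht₀, x₀, hx₀⟩ := hS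
      refine ⟨Icc (t₀ - L) (t₀ + L), measurableSet_Icc, ?_, ?_, ?_⟩
      · rw [Real.volume_Icc, ← hofL n]
        apply ENNReal.ofReal_le_ofReal
        rw [← hLdef]; linarith
      · change Metric.ediam (Icc (t₀ - L) (t₀ + L)) ≤ _
        rw [Real.ediam_Icc, ← hofL n]
        apply ENNReal.ofReal_le_ofReal
        rw [← hLdef]; linarith
      · intro t ht ⟨x, hx⟩
        rcases le_total t₀ t with h | h
        · have := clean_interval_bound hγ' hρ (hdlt n) ht₀ ht h
            ⟨hx₀.1.1, hx₀.2⟩ hx₀.1.2 ⟨hx.1.1, hx.2⟩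
          exact Set.mem_Icc.2 ⟨by linarith, by linarith⟩
        · have := clean_interval_bound hγ' hρ (hdlt n) ht ht₀ h
            ⟨hx.1.1, hx.2⟩ hx.1.2 ⟨hx₀.1.1, hx₀.2⟩
          exact Set.mem_Icc.2 ⟨by linarith, by linarith⟩
    · push_neg at hS
      exact ⟨∅, MeasurableSet.empty, by simp, by simp [EMetric.diam],
        fun t ht hne => absurd hne (by simp [hS t ht])⟩
  choose J hJmeas hJvol hJdiam hJmem using hJn
  exact ⟨c, J, hcov, hdiam, hsum', hJmeas, hJvol, hJdiam, hJmem⟩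

lemma rbound_facts {mm : ℝ} (hmm : 0 < mm) (k : ℕ) :
    0 < ENNReal.ofReal (min (mm/2) ((2:ℝ)⁻¹ ^ k)) ∧
    ENNReal.ofReal (min (mm/2) ((2:ℝ)⁻¹ ^ k)) < ENNReal.ofReal mm := by
  constructor
  · rw [ENNReal.ofReal_pos]
    exact lt_min (by linarith) (by positivity)
  · rw [ENNReal.ofReal_lt_ofReal_iff hmm]
    exact lt_of_le_of_lt (min_le_left _ _) (by linarith)

lemma clean_dimH_param {N : ℕ} {Efam : ℝ → Set (EuclideanSpace ℝ (Fin N))}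
    {β' γ' : ℝ} (hβ' : 0 < β') (hγ' : 0 < γ')
    (hE0 : μH[β'] (⋃ t ∈ Icc (-1:ℝ) 1, Efam t) = 0)
    {ρ : ℝ → EuclideanSpace ℝ (Fin N) → ℝ}
    (hρ : ∀ t ∈ Icc (-1:ℝ) 1, ∀ x ∈ Efam t, ∀ r ∈ Ioo (0:ℝ) (ρ t x), ∀ t' ∈ Icc (-1:ℝ) 1,
        t + r ^ γ' < t' → ball x r ∩ Efam t' = ∅)
    {mm : ℝ} (hmm : 0 < mm) :
    dimH {t ∈ Icc (-1:ℝ) 1 | (Efam t ∩ {x | mm ≤ ρ t x}).Nonempty}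
      ≤ ENNReal.ofReal (β' / γ') := by
  set s : ℝ := β' / γ' with hs
  have hs0 : 0 < s := div_pos hβ' hγ'
  set T := {t ∈ Icc (-1:ℝ) 1 | (Efam t ∩ {x | mm ≤ ρ t x}).Nonempty} with hT
  -- get covers for each k
  have hcc : ∀ k : ℕ, ∃ (c : ℕ → Set (EuclideanSpace ℝ (Fin N))) (J : ℕ → Set ℝ),
      ((⋃ t ∈ Icc (-1:ℝ) 1, Efam t) ⊆ ⋃ n, c n) ∧
      (∀ n, EMetric.diam (c n) ≤ ENNReal.ofReal (min (mm/2) ((2:ℝ)⁻¹ ^ k))) ∧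
      (∑' n, EMetric.diam (c n) ^ β') ≤ ((2:ℝ≥0∞)⁻¹) ^ k ∧
      (∀ n, MeasurableSet (J n)) ∧
      (∀ n, volume (J n) ≤ 2 * EMetric.diam (c n) ^ γ') ∧
      (∀ n, EMetric.diam (J n) ≤ 2 * EMetric.diam (c n) ^ γ') ∧
      (∀ n, ∀ t ∈ Icc (-1:ℝ) 1, (Efam t ∩ {x | mm ≤ ρ t x} ∩ c n).Nonempty → t ∈ J n) := by
    intro k
    exact clean_cover hβ' hγ' hE0 hρ (η := ((2:ℝ≥0∞)⁻¹) ^ k)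
      (ENNReal.pow_pos (by simp) k) (rbound_facts hmm k).1 (rbound_facts hmm k).2
  choose c J hcov hdiam hsum hJmeas hJvol hJdiam hJmem using hcc
  -- the Hausdorff measure of T in dimension s vanishes
  have hμ : μH[s] T = 0 := by
    have hbound := Measure.hausdorffMeasure_le_liminf_tsum (l := atTop) s T
      (fun k => 2 * ENNReal.ofReal ((min (mm/2) ((2:ℝ)⁻¹ ^ k)) ^ γ')) ?_ J ?_ ?_
    · refine le_antisymm (le_trans hbound ?_) zero_le
      have h2 : ∀ k, (∑' n, EMetric.diam (J k n) ^ s)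
          ≤ (2:ℝ≥0∞) ^ s * ((2:ℝ≥0∞)⁻¹) ^ k := by
        intro k
        have : ∀ n, EMetric.diam (J k n) ^ s ≤ (2:ℝ≥0∞) ^ s * EMetric.diam (c k n) ^ β' := by
          intro n
          calc EMetric.diam (J k n) ^ s ≤ (2 * EMetric.diam (c k n) ^ γ') ^ s :=
                ENNReal.rpow_le_rpow (hJdiam k n) hs0.le
            _ = (2:ℝ≥0∞) ^ s * (EMetric.diam (c k n) ^ γ') ^ s :=
                ENNReal.mul_rpow_of_nonneg _ _ hs0.le
            _ = (2:ℝ≥0∞) ^ s * EMetric.diam (c k n) ^ β' := by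
                rw [← ENNReal.rpow_mul]
                congr 1
                rw [hs]
                field_simp
        calc (∑' n, EMetric.diam (J k n) ^ s)
            ≤ ∑' n, (2:ℝ≥0∞) ^ s * EMetric.diam (c k n) ^ β' := ENNReal.tsum_le_tsum this
          _ = (2:ℝ≥0∞) ^ s * ∑' n, EMetric.diam (c k n) ^ β' := ENNReal.tsum_mul_left
          _ ≤ (2:ℝ≥0∞) ^ s * ((2:ℝ≥0∞)⁻¹) ^ k := by
              exact mul_le_mul_right (hsum k) _
      have h3 : Tendsto (fun k : ℕ => (2:ℝ≥0∞) ^ s * ((2:ℝ≥0∞)⁻¹) ^ k) atTop (𝓝 0) := by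
        have h4 : Tendsto (fun k : ℕ => ((2:ℝ≥0∞)⁻¹) ^ k) atTop (𝓝 0) :=
          ENNReal.tendsto_pow_atTop_nhds_zero_of_lt_one (by simp [ENNReal.inv_lt_one])
        have := ENNReal.Tendsto.const_mul (a := (2:ℝ≥0∞) ^ s) h4
          (Or.inr (ENNReal.rpow_ne_top_of_nonneg hs0.le (by simp)))
        simpa using this
      calc liminf (fun k => ∑' n, EMetric.diam (J k n) ^ s) atTop
          ≤ liminf (fun k : ℕ => (2:ℝ≥0∞) ^ s * ((2:ℝ≥0∞)⁻¹) ^ k) atTop :=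
            liminf_le_liminf (Eventually.of_forall h2)
        _ = 0 := h3.liminf_eq
    · -- radii tend to zero
      have hreal : Tendsto (fun k : ℕ => min (mm/2) ((2:ℝ)⁻¹ ^ k)) atTop (𝓝 0) := by
        have h5 : Tendsto (fun k : ℕ => ((2:ℝ)⁻¹) ^ k) atTop (𝓝 0) :=
          tendsto_pow_atTop_nhds_zero_of_lt_one (by norm_num) (by norm_num)
        have h6 : Tendsto (fun k : ℕ => min (mm/2) ((2:ℝ)⁻¹ ^ k)) atTop (𝓝 (min (mm/2) 0)) :=
          tendsto_const_nhds.min h5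
        simpa [min_eq_right (by linarith : (0:ℝ) ≤ mm/2)] using h6
      have hreal2 : Tendsto (fun k : ℕ => (min (mm/2) ((2:ℝ)⁻¹ ^ k)) ^ γ') atTop (𝓝 0) := by
        have := ((Real.continuous_rpow_const hγ'.le).tendsto 0).comp hreal
        simpa [Real.zero_rpow hγ'.ne', Function.comp_def] using this
      have hoo : Tendsto (fun k : ℕ => ENNReal.ofReal ((min (mm/2) ((2:ℝ)⁻¹ ^ k)) ^ γ')) atTop
          (𝓝 0) := by
        have := (ENNReal.continuous_ofReal.tendsto 0).comp hreal2
        simpa [Function.comp_def] using this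
      have := ENNReal.Tendsto.const_mul (a := (2:ℝ≥0∞)) hoo (Or.inr (by simp : (2:ℝ≥0∞) ≠ ⊤))
      simpa using this
    · refine Eventually.of_forall fun k n => le_trans (hJdiam k n) ?_
      have heq : (ENNReal.ofReal (min (mm/2) ((2:ℝ)⁻¹ ^ k))) ^ γ'
          = ENNReal.ofReal ((min (mm/2) ((2:ℝ)⁻¹ ^ k)) ^ γ') :=
        ENNReal.ofReal_rpow_of_nonneg (le_min (by linarith) (by positivity)) hγ'.le
      exact le_trans (mul_le_mul_right (ENNReal.rpow_le_rpow (hdiam k n) hγ'.le) _)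
        (le_of_eq (by rw [heq]))
    · refine Eventually.of_forall fun k => ?_
      rintro t ⟨ht, x, hx⟩
      have hxE : x ∈ ⋃ t ∈ Icc (-1:ℝ) 1, Efam t :=
        Set.mem_biUnion ht hx.1
      obtain ⟨n, hn⟩ := Set.mem_iUnion.1 (hcov k hxE)
      exact Set.mem_iUnion.2 ⟨n, hJmem k n t ht ⟨x, ⟨hx.1, hx.2⟩, hn⟩⟩
  -- conclude
  have : dimH T ≤ (s.toNNReal : ℝ≥0∞) := by
    apply dimH_le_of_hausdorffMeasure_ne_top
    rw [Real.coe_toNNReal s hs0.le, hμ]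
    exact ENNReal.zero_ne_top
  rwa [show (s.toNNReal : ℝ≥0∞) = ENNReal.ofReal s from rfl] at this

lemma clean_ae_param {N : ℕ} {Efam : ℝ → Set (EuclideanSpace ℝ (Fin N))}
    {β' γ' : ℝ} (hβ' : 0 < β') (hγ' : 0 < γ') (hα : 0 < β' - γ')
    (hE0 : μH[β'] (⋃ t ∈ Icc (-1:ℝ) 1, Efam t) = 0)
    {ρ : ℝ → EuclideanSpace ℝ (Fin N) → ℝ}
    (hρ : ∀ t ∈ Icc (-1:ℝ) 1, ∀ x ∈ Efam t, ∀ r ∈ Ioo (0:ℝ) (ρ t x), ∀ t' ∈ Icc (-1:ℝ) 1,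
        t + r ^ γ' < t' → ball x r ∩ Efam t' = ∅)
    {mm : ℝ} (hmm : 0 < mm) :
    ∀ᵐ t ∂(volume : Measure ℝ), t ∈ Icc (-1:ℝ) 1 →
      dimH (Efam t ∩ {x | mm ≤ ρ t x}) ≤ ENNReal.ofReal (β' - γ') := by
  classical
  set α : ℝ := β' - γ' with hαdef
  have hcc : ∀ k : ℕ, ∃ (c : ℕ → Set (EuclideanSpace ℝ (Fin N))) (J : ℕ → Set ℝ),
      ((⋃ t ∈ Icc (-1:ℝ) 1, Efam t) ⊆ ⋃ n, c n) ∧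
      (∀ n, EMetric.diam (c n) ≤ ENNReal.ofReal (min (mm/2) ((2:ℝ)⁻¹ ^ k))) ∧
      (∑' n, EMetric.diam (c n) ^ β') ≤ ((2:ℝ≥0∞)⁻¹) ^ k ∧
      (∀ n, MeasurableSet (J n)) ∧
      (∀ n, volume (J n) ≤ 2 * EMetric.diam (c n) ^ γ') ∧
      (∀ n, EMetric.diam (J n) ≤ 2 * EMetric.diam (c n) ^ γ') ∧
      (∀ n, ∀ t ∈ Icc (-1:ℝ) 1, (Efam t ∩ {x | mm ≤ ρ t x} ∩ c n).Nonempty → t ∈ J n) := by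
    intro k
    exact clean_cover hβ' hγ' hE0 hρ (η := ((2:ℝ≥0∞)⁻¹) ^ k)
      (ENNReal.pow_pos (by simp) k) (rbound_facts hmm k).1 (rbound_facts hmm k).2
  choose c J hcov hdiam hsum hJmeas hJvol hJdiam hJmem using hcc
  have hdtop : ∀ k n, EMetric.diam (c k n) ≠ ⊤ :=
    fun k n => (lt_of_le_of_lt (hdiam k n) ENNReal.ofReal_lt_top).ne
  set g : ℕ → ℝ → ℝ≥0∞ :=
    fun k t => ∑' n, (J k n).indicator (fun _ => EMetric.diam (c k n) ^ α) t with hg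
  have hgmeas : ∀ k, Measurable (g k) :=
    fun k => Measurable.ennreal_tsum fun n => measurable_const.indicator (hJmeas k n)
  have hgint : ∀ k, (∫⁻ t, g k t) ≤ 2 * ((2:ℝ≥0∞)⁻¹) ^ k := by
    intro k
    rw [hg]
    simp only
    rw [lintegral_tsum fun n => (measurable_const.indicator (hJmeas k n)).aemeasurable]
    have hterm : ∀ n, (∫⁻ t, (J k n).indicator (fun _ => EMetric.diam (c k n) ^ α) t)
        ≤ 2 * EMetric.diam (c k n) ^ β' := by
      intro n
      rw [lintegral_indicator_const (hJmeas k n)]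
      calc EMetric.diam (c k n) ^ α * volume (J k n)
          ≤ EMetric.diam (c k n) ^ α * (2 * EMetric.diam (c k n) ^ γ') :=
            mul_le_mul_right (hJvol k n) _
        _ = 2 * (EMetric.diam (c k n) ^ α * EMetric.diam (c k n) ^ γ') := by ring
        _ = 2 * EMetric.diam (c k n) ^ β' := by
            congr 1
            rcases eq_or_ne (EMetric.diam (c k n)) 0 with h | h
            · rw [h, ENNReal.zero_rpow_of_pos hα, ENNReal.zero_rpow_of_pos hβ', zero_mul]
            · rw [← ENNReal.rpow_add _ _ h (hdtop k n)]
              congr 1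
              rw [hαdef]; ring
    calc (∑' n, ∫⁻ t, (J k n).indicator (fun _ => EMetric.diam (c k n) ^ α) t)
        ≤ ∑' n, 2 * EMetric.diam (c k n) ^ β' := ENNReal.tsum_le_tsum hterm
      _ = 2 * ∑' n, EMetric.diam (c k n) ^ β' := ENNReal.tsum_mul_left
      _ ≤ 2 * ((2:ℝ≥0∞)⁻¹) ^ k := mul_le_mul_right (hsum k) _
  have hGmeas : Measurable (fun t => ∑' k, g k t) := Measurable.ennreal_tsum hgmeas
  have hGint : (∫⁻ t, ∑' k, g k t) ≠ ⊤ := by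
    rw [lintegral_tsum fun k => (hgmeas k).aemeasurable]
    refine ne_of_lt (lt_of_le_of_lt (ENNReal.tsum_le_tsum hgint) ?_)
    rw [ENNReal.tsum_mul_left, ENNReal.tsum_geometric]
    refine ENNReal.mul_lt_top (by simp) ?_
    rw [ENNReal.one_sub_inv_two]
    simp
  have hae := ae_lt_top hGmeas hGint
  filter_upwards [hae] with t htG htIcc
  have htend : Tendsto (fun k => g k t) atTop (𝓝 0) :=
    ENNReal.tendsto_atTop_zero_of_tsum_ne_top htG.ne
  have hμ : μH[α] (Efam t ∩ {x | mm ≤ ρ t x}) = 0 := by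
    have hbound := Measure.hausdorffMeasure_le_liminf_tsum (l := atTop) α
      (Efam t ∩ {x | mm ≤ ρ t x})
      (fun k => ENNReal.ofReal (min (mm/2) ((2:ℝ)⁻¹ ^ k)))
      ?_ (fun k n => if t ∈ J k n then c k n else ∅) ?_ ?_
    · refine le_antisymm (le_trans hbound ?_) zero_le
      have h2 : ∀ k, (∑' n, EMetric.diam (if t ∈ J k n then c k n else ∅) ^ α) ≤ g k t := by
        intro k
        refine ENNReal.tsum_le_tsum fun n => ?_
        by_cases h : t ∈ J k n
        · rw [if_pos h, Set.indicator_of_mem h]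
        · rw [if_neg h, Set.indicator_of_notMem h, EMetric.diam, Metric.ediam_empty,
            ENNReal.zero_rpow_of_pos hα]
      calc liminf (fun k => ∑' n, EMetric.diam (if t ∈ J k n then c k n else ∅) ^ α) atTop
          ≤ liminf (fun k => g k t) atTop := liminf_le_liminf (Eventually.of_forall h2)
        _ = 0 := htend.liminf_eq
    · -- radii tend to zero
      have h5 : Tendsto (fun k : ℕ => ((2:ℝ)⁻¹) ^ k) atTop (𝓝 0) :=
        tendsto_pow_atTop_nhds_zero_of_lt_one (by norm_num) (by norm_num)
      have h6 : Tendsto (fun k : ℕ => min (mm/2) ((2:ℝ)⁻¹ ^ k)) atTop (𝓝 (min (mm/2) 0)) :=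
        tendsto_const_nhds.min h5
      have h7 : Tendsto (fun k : ℕ => min (mm/2) ((2:ℝ)⁻¹ ^ k)) atTop (𝓝 0) := by
        simpa [min_eq_right (by linarith : (0:ℝ) ≤ mm/2)] using h6
      have := (ENNReal.continuous_ofReal.tendsto 0).comp h7
      simpa [Function.comp_def] using this
    · refine Eventually.of_forall fun k n => ?_
      by_cases h : t ∈ J k n
      · simp only [if_pos h]; exact hdiam k n
      · simp only [if_neg h, EMetric.diam, Metric.ediam_empty]; exact zero_le
    · refine Eventually.of_forall fun k => ?_
      rintro x ⟨hx1, hx2⟩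
      have hxE : x ∈ ⋃ t ∈ Icc (-1:ℝ) 1, Efam t := Set.mem_biUnion htIcc hx1
      obtain ⟨n, hn⟩ := Set.mem_iUnion.1 (hcov k hxE)
      have htJ : t ∈ J k n := hJmem k n t htIcc ⟨x, ⟨hx1, hx2⟩, hn⟩
      exact Set.mem_iUnion.2 ⟨n, by simp only [if_pos htJ]; exact hn⟩
  have hdim : dimH (Efam t ∩ {x | mm ≤ ρ t x}) ≤ (α.toNNReal : ℝ≥0∞) := by
    apply dimH_le_of_hausdorffMeasure_ne_top
    rw [Real.coe_toNNReal α hα.le, hμ]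
    exact ENNReal.zero_ne_top
  rwa [show (α.toNNReal : ℝ≥0∞) = ENNReal.ofReal α from rfl] at hdim

end AbstractCleaning

section MainProof
open ENNReal NNReal

/-- **Proposition 2.15 (abstract GMT cleaning).** Let `{E_t}_{t∈[-1,1]}` with
`E = ∪_t E_t ⊆ ℝ^N`, `1 ≤ β ≤ N`, `γ > 0`. Assume `dim_H E ≤ β` and the cleaning property:
for all `ε > 0`, `t₀ ∈ [-1,1]`, `x₀ ∈ E_{t₀}` there is `ρ > 0` with `B_r(x₀) ∩ E_t = ∅` for
all `r ∈ (0,ρ)` and `t > t₀ + r^{γ-ε}`. Then (a) if `γ > β`,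
`dim_H {t : E_t ≠ ∅} ≤ β/γ`; (b) if `γ ≤ β`, `dim_H E_t ≤ β - γ` for a.e. `t ∈ [-1,1]`. -/
theorem abstract_cleaning_dimension (N : ℕ) (Efam : ℝ → Set (EuclideanSpace ℝ (Fin N)))
    (β γ : ℝ) (hβ1 : 1 ≤ β) (hβN : β ≤ N) (hγ : 0 < γ)
    (hdim : dimH (⋃ t ∈ Icc (-1 : ℝ) 1, Efam t) ≤ ENNReal.ofReal β)
    (hclean : ∀ ε > (0 : ℝ), ∀ t₀ ∈ Icc (-1 : ℝ) 1, ∀ x₀ ∈ Efam t₀,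
      ∃ ρ > (0 : ℝ), ∀ r ∈ Ioo (0 : ℝ) ρ, ∀ t ∈ Icc (-1 : ℝ) 1,
        t₀ + r ^ (γ - ε) < t → ball x₀ r ∩ Efam t = ∅) :
    (β < γ → dimH {t ∈ Icc (-1 : ℝ) 1 | (Efam t).Nonempty} ≤ ENNReal.ofReal (β / γ)) ∧
    (γ ≤ β → ∀ᵐ t ∂(volume.restrict (Icc (-1 : ℝ) 1)),
      dimH (Efam t) ≤ ENNReal.ofReal (β - γ)) := by
  classical
  have hβ0 : (0:ℝ) < β := lt_of_lt_of_le one_pos hβ1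
  -- Hausdorff measure of the whole union vanishes at every exponent `β + 1/(j+1)`
  have hE0 : ∀ j : ℕ, μH[β + 1/((j:ℝ)+1)] (⋃ t ∈ Icc (-1:ℝ) 1, Efam t) = 0 := by
    intro j
    have hβ'pos : (0:ℝ) ≤ β + 1/((j:ℝ)+1) := by positivity
    have hlt : dimH (⋃ t ∈ Icc (-1:ℝ) 1, Efam t)
        < (((β + 1/((j:ℝ)+1)).toNNReal : ℝ≥0) : ℝ≥0∞) := by
      refine lt_of_le_of_lt hdim ?_
      rw [show (((β + 1/((j:ℝ)+1)).toNNReal : ℝ≥0) : ℝ≥0∞)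
        = ENNReal.ofReal (β + 1/((j:ℝ)+1)) from rfl]
      rw [ENNReal.ofReal_lt_ofReal_iff (by positivity)]
      have h1 : (0:ℝ) < 1/((j:ℝ)+1) := by positivity
      linarith
    have h0 := hausdorffMeasure_of_dimH_lt hlt
    rwa [Real.coe_toNNReal _ hβ'pos] at h0
  -- basic facts about the modified exponents
  have hj1 : ∀ j : ℕ, (0:ℝ) < 1/((j:ℝ)+1) := fun j => by positivity
  have hε : ∀ j : ℕ, (0:ℝ) < γ/(2*((j:ℝ)+1)) := fun j => by positivity
  have hγ' : ∀ j : ℕ, (0:ℝ) < γ - γ/(2*((j:ℝ)+1)) := by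
    intro j
    have h2 : γ/(2*((j:ℝ)+1)) ≤ γ/2 := by
      gcongr
      · have h3 : (0:ℝ) ≤ (j:ℝ) := Nat.cast_nonneg j
        linarith
    linarith
  -- limits of the approximating exponents
  have h1 : Tendsto (fun j : ℕ => 1/((j:ℝ)+1)) atTop (𝓝 0) :=
    tendsto_one_div_add_atTop_nhds_zero_nat
  have hnum : Tendsto (fun j : ℕ => β + 1/((j:ℝ)+1)) atTop (𝓝 β) := by
    have := tendsto_const_nhds.add h1 (f := fun _ : ℕ => β)
    simpa using this
  have hd0 : Tendsto (fun j : ℕ => γ/(2*((j:ℝ)+1))) atTop (𝓝 0) := by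
    have h2 := h1.const_mul (γ/2)
    simp only [mul_zero] at h2
    refine h2.congr fun j => ?_
    rw [div_mul_div_comm, mul_one]
  have hden : Tendsto (fun j : ℕ => γ - γ/(2*((j:ℝ)+1))) atTop (𝓝 γ) := by
    have := tendsto_const_nhds.sub hd0 (f := fun _ : ℕ => γ)
    simpa using this
  constructor
  · -- part (a)
    intro hβγ
    have hstep : ∀ j : ℕ, dimH {t ∈ Icc (-1:ℝ) 1 | (Efam t).Nonempty}
        ≤ ENNReal.ofReal ((β + 1/((j:ℝ)+1)) / (γ - γ/(2*((j:ℝ)+1)))) := by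
      intro j
      obtain hcl := hclean (γ/(2*((j:ℝ)+1))) (hε j)
      choose! ρ hρpos hρ using hcl
      have hcup : {t ∈ Icc (-1:ℝ) 1 | (Efam t).Nonempty} ⊆
          ⋃ m : ℕ, {t ∈ Icc (-1:ℝ) 1 | (Efam t ∩ {x | 1/((m:ℝ)+1) ≤ ρ t x}).Nonempty} := by
        rintro t ⟨ht, x, hx⟩
        obtain ⟨m, hm⟩ := exists_nat_one_div_lt (hρpos t ht x hx)
        exact Set.mem_iUnion.2 ⟨m, ht, x, hx, hm.le⟩
      calc dimH {t ∈ Icc (-1:ℝ) 1 | (Efam t).Nonempty}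
          ≤ dimH (⋃ m : ℕ,
            {t ∈ Icc (-1:ℝ) 1 | (Efam t ∩ {x | 1/((m:ℝ)+1) ≤ ρ t x}).Nonempty}) :=
            dimH_mono hcup
        _ = ⨆ m : ℕ, dimH
            {t ∈ Icc (-1:ℝ) 1 | (Efam t ∩ {x | 1/((m:ℝ)+1) ≤ ρ t x}).Nonempty} :=
            dimH_iUnion _
        _ ≤ ENNReal.ofReal ((β + 1/((j:ℝ)+1)) / (γ - γ/(2*((j:ℝ)+1)))) :=
            iSup_le fun m =>
              clean_dimH_param (by positivity) (hγ' j) (hE0 j) hρ (hj1 m)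
    have hlim : Tendsto (fun j : ℕ =>
        ENNReal.ofReal ((β + 1/((j:ℝ)+1)) / (γ - γ/(2*((j:ℝ)+1))))) atTop
        (𝓝 (ENNReal.ofReal (β/γ))) := by
      refine ENNReal.tendsto_ofReal ?_
      exact hnum.div hden hγ.ne'
    exact ge_of_tendsto hlim (Eventually.of_forall hstep)
  · -- part (b)
    intro hγβ
    have hstep : ∀ j : ℕ, ∀ᵐ t ∂(volume : Measure ℝ), t ∈ Icc (-1:ℝ) 1 →
        dimH (Efam t) ≤ ENNReal.ofReal ((β + 1/((j:ℝ)+1)) - (γ - γ/(2*((j:ℝ)+1)))) := by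
      intro j
      obtain hcl := hclean (γ/(2*((j:ℝ)+1))) (hε j)
      choose! ρ hρpos hρ using hcl
      have hα : (0:ℝ) < (β + 1/((j:ℝ)+1)) - (γ - γ/(2*((j:ℝ)+1))) := by
        have := hj1 j
        have := hε j
        linarith
      have hm : ∀ m : ℕ, ∀ᵐ t ∂(volume : Measure ℝ), t ∈ Icc (-1:ℝ) 1 →
          dimH (Efam t ∩ {x | 1/((m:ℝ)+1) ≤ ρ t x})
            ≤ ENNReal.ofReal ((β + 1/((j:ℝ)+1)) - (γ - γ/(2*((j:ℝ)+1)))) :=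
        fun m => clean_ae_param (by positivity) (hγ' j) hα (hE0 j) hρ (hj1 m)
      rw [← ae_all_iff] at hm
      filter_upwards [hm] with t ht htIcc
      have hEeq : Efam t = ⋃ m : ℕ, Efam t ∩ {x | 1/((m:ℝ)+1) ≤ ρ t x} := by
        apply Set.Subset.antisymm
        · intro x hx
          obtain ⟨m, hmlt⟩ := exists_nat_one_div_lt (hρpos t htIcc x hx)
          exact Set.mem_iUnion.2 ⟨m, hx, hmlt.le⟩
        · exact Set.iUnion_subset fun m => Set.inter_subset_left
      rw [hEeq, dimH_iUnion]
      exact iSup_le fun m => ht m htIcc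
    rw [ae_restrict_iff' measurableSet_Icc]
    rw [← ae_all_iff] at hstep
    filter_upwards [hstep] with t ht htIcc
    have hlim : Tendsto (fun j : ℕ =>
        ENNReal.ofReal ((β + 1/((j:ℝ)+1)) - (γ - γ/(2*((j:ℝ)+1))))) atTop
        (𝓝 (ENNReal.ofReal (β - γ))) := by
      refine ENNReal.tendsto_ofReal ?_
      exact hnum.sub hden
    exact ge_of_tendsto hlim (Eventually.of_forall fun j => ht j htIcc)
end MainProof
end
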